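/- arXiv:1610.05270 — 3 statements merged into one kernel-verified Lean document; each statement's English description precedes it below -/
import Mathlib

section
/- The free distributive lattice on a finite set is finite. -/
/-- Lattice terms (polynomials built from `⊓` and `⊔`) over a set `α` of generators. -/
inductive LatTerm (α : Type) : Type
  | var : α → LatTerm α
  | inf : LatTerm α → LatTerm α → LatTerm α
  | sup : LatTerm α → LatTerm α → LatTerm α

/-- Evaluation of a lattice term in a lattice `D` at a valuation `d`. -/
def LatTerm.eval {D : Type} [Lattice D] {α : Type} (d : α → D) : LatTerm α → D
  | .var i => d i
  | .inf s t => s.eval d ⊓ t.eval d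
  | .sup s t => s.eval d ⊔ t.eval d

/-- Two lattice terms are identified iff they are equal in every distributive lattice. -/
instance latSetoid (α : Type) : Setoid (LatTerm α) where
  r s t := ∀ (D : Type) [DistribLattice D] (d : α → D), s.eval d = t.eval d
  iseqv :=
    ⟨fun _ _ _ _ => rfl, fun h D _ d => (h D d).symm,
      fun h₁ h₂ D _ d => (h₁ D d).trans (h₂ D d)⟩

/-- The free distributive lattice on the set `α` of generators. -/
def FreeDL (α : Type) : Type := Quotient (latSetoid α)

section DNF
variable {α : Type} [DecidableEq α]

/-- Disjunctive normal form of a lattice term: a finite set of "conjunctions". -/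
def LatTerm.dnf : LatTerm α → Finset (Finset α)
  | .var i => {{i}}
  | .inf s t => (s.dnf ×ˢ t.dnf).image fun p => p.1 ∪ p.2
  | .sup s t => s.dnf ∪ t.dnf

lemma LatTerm.mem_dnf_nonempty (t : LatTerm α) : ∀ S ∈ t.dnf, S.Nonempty := by
  induction t with
  | var i => intro S hS; simp only [dnf, Finset.mem_singleton] at hS; subst hS; simp
  | inf s t hs ht =>
    intro S hS
    simp only [dnf, Finset.mem_image, Finset.mem_product, Prod.exists] at hS
    obtain ⟨a, b, ⟨ha, hb⟩, rfl⟩ := hS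
    exact (hs a ha).mono Finset.subset_union_left
  | sup s t hs ht =>
    intro S hS
    simp only [dnf, Finset.mem_union] at hS
    exact hS.elim (hs S) (ht S)

/-- Each conjunction in the DNF is below the term's value. -/
lemma LatTerm.inf_dnf_le {D : Type} [Lattice D] (d : α → D) (t : LatTerm α) :
    ∀ S ∈ t.dnf, ∀ (h : S.Nonempty), S.inf' h d ≤ t.eval d := by
  induction t with
  | var i =>
    intro S hS h
    simp only [dnf, Finset.mem_singleton] at hS
    subst hS
    simp [eval]
  | inf s t hs ht =>
    intro S hS h
    simp only [dnf, Finset.mem_image, Finset.mem_product, Prod.exists] at hS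
    obtain ⟨A, B, ⟨hA, hB⟩, rfl⟩ := hS
    have hA : A.Nonempty := s.mem_dnf_nonempty A hA
    have hB' : B.Nonempty := t.mem_dnf_nonempty B hB
    rw [Finset.inf'_union hA hB']
    exact inf_le_inf (hs A ‹A ∈ s.dnf› hA) (ht B hB hB')
  | sup s t hs ht =>
    intro S hS h
    simp only [dnf, Finset.mem_union] at hS
    rcases hS with h' | h'
    · exact le_trans (hs S h' h) le_sup_left
    · exact le_trans (ht S h' h) le_sup_right

/-- Relative upper bound: the term's value is bounded by anything above all its
DNF conjunctions (relative to a context `c`, to make the induction go through). -/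
lemma LatTerm.eval_le_of_dnf_le {D : Type} [DistribLattice D] (d : α → D) (t : LatTerm α) :
    ∀ (c u : D), (∀ S ∈ t.dnf, ∀ (h : S.Nonempty), c ⊓ S.inf' h d ≤ u) →
      c ⊓ t.eval d ≤ u := by
  induction t with
  | var i =>
    intro c u hu
    have := hu {i} (by simp [dnf]) (by simp)
    simpa [eval] using this
  | inf s t hs ht =>
    intro c u hu
    rw [eval, ← inf_assoc]
    apply ht (c ⊓ s.eval d) u
    intro B hB hB'
    rw [inf_comm c (s.eval d), inf_assoc, inf_comm (s.eval d)]
    apply hs (c ⊓ B.inf' hB' d) u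
    intro A hA hA'
    have key : (c ⊓ B.inf' hB' d) ⊓ A.inf' hA' d
        = c ⊓ (A ∪ B).inf' ((s.mem_dnf_nonempty A hA).mono Finset.subset_union_left) d := by
      rw [Finset.inf'_union (s.mem_dnf_nonempty A hA) hB', inf_assoc,
        inf_comm (B.inf' hB' d)]
    rw [key]
    apply hu
    simp only [dnf, Finset.mem_image, Finset.mem_product, Prod.exists]
    exact ⟨A, B, ⟨hA, hB⟩, rfl⟩
  | sup s t hs ht =>
    intro c u hu
    rw [eval, inf_sup_left]
    apply sup_le
    · exact hs c u fun S hS h => hu S (by simp only [dnf, Finset.mem_union]; exact Or.inl hS) h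
    · exact ht c u fun S hS h => hu S (by simp only [dnf, Finset.mem_union]; exact Or.inr hS) h

/-- If a term evaluates to `true` in `Bool`, some DNF conjunction is all-true. -/
lemma LatTerm.exists_dnf_of_eval_bool (d : α → Bool) (t : LatTerm α)
    (h : t.eval d = true) : ∃ T ∈ t.dnf, ∀ i ∈ T, d i = true := by
  induction t with
  | var i => exact ⟨{i}, by simp [dnf], by simpa [eval] using h⟩
  | inf s t hs ht =>
    rw [eval] at h
    have hs' : s.eval d = true := by
      cases hse : s.eval d <;> simp [hse] at h ⊢
    have ht' : t.eval d = true := by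
      cases hte : t.eval d <;> simp [hte, hs'] at h ⊢
    obtain ⟨A, hA, hA'⟩ := hs hs'
    obtain ⟨B, hB, hB'⟩ := ht ht'
    refine ⟨A ∪ B, ?_, ?_⟩
    · simp only [dnf, Finset.mem_image, Finset.mem_product, Prod.exists]
      exact ⟨A, B, ⟨hA, hB⟩, rfl⟩
    · intro i hi
      rcases Finset.mem_union.mp hi with h' | h'
      · exact hA' i h'
      · exact hB' i h'
  | sup s t hs ht =>
    rw [eval] at h
    rcases Bool.or_eq_true_iff.mp (by simpa using h) with h' | h'
    · obtain ⟨A, hA, hA'⟩ := hs h'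
      exact ⟨A, by simp only [dnf, Finset.mem_union]; exact Or.inl hA, hA'⟩
    · obtain ⟨B, hB, hB'⟩ := ht h'
      exact ⟨B, by simp only [dnf, Finset.mem_union]; exact Or.inr hB, hB'⟩

/-- If two terms agree under all Boolean valuations, one is below the other everywhere. -/
lemma LatTerm.eval_le_of_bool (s t : LatTerm α)
    (h : ∀ d : α → Bool, s.eval d = t.eval d)
    (D : Type) [DistribLattice D] (d : α → D) : s.eval d ≤ t.eval d := by
  have := s.eval_le_of_dnf_le d (s.eval d) (t.eval d) ?_
  · simpa using this
  intro S hS hS'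
  refine le_trans inf_le_right ?_
  -- find T ∈ t.dnf with T ⊆ S
  classical
  set d₀ : α → Bool := fun i => decide (i ∈ S) with hd₀
  have hSeval : s.eval d₀ = true := by
    have h1 : S.inf' hS' d₀ ≤ s.eval d₀ := s.inf_dnf_le d₀ S hS hS'
    have h2 : S.inf' hS' d₀ = true := by
      refine le_antisymm (Bool.le_true _) (Finset.le_inf' hS' d₀ fun i hi => by simp [hd₀, hi])
    rw [h2] at h1
    exact le_antisymm (by simp) h1
  have hTeval : t.eval d₀ = true := (h d₀) ▸ hSeval
  obtain ⟨T, hT, hT'⟩ := t.exists_dnf_of_eval_bool d₀ hTeval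
  have hTS : T ⊆ S := fun i hi => by simpa [hd₀] using hT' i hi
  have hT'' : T.Nonempty := t.mem_dnf_nonempty T hT
  refine le_trans ?_ (t.inf_dnf_le d T hT hT'')
  exact Finset.le_inf' hT'' d fun i hi => Finset.inf'_le d (hTS hi)
end DNF


/-- The free distributive lattice on a finite set is finite. -/
theorem freeDL_finite (F : Type) [Finite F] : Finite (FreeDL F) := by
  classical
  have : Finite ((F → Bool) → Bool) := inferInstance
  apply Finite.of_injective (fun x : FreeDL F =>
    Quotient.lift (fun t : LatTerm F => fun d : F → Bool => t.eval d)
      (fun a b h => funext fun d => by exact h Bool d) x)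
  rintro ⟨s⟩ ⟨t⟩ h
  apply Quotient.sound
  intro D _ d
  have hb : ∀ d : F → Bool, s.eval d = t.eval d := fun d => congrFun h d
  exact le_antisymm (LatTerm.eval_le_of_bool s t hb D d)
    (LatTerm.eval_le_of_bool t s (fun d => (hb d).symm) D d)
end

section
/- The free De Morgan algebra on n generators is, as a distributive lattice, isomorphic to the free distributive lattice on 2n generators. -/
/-- A De Morgan algebra: a bounded distributive lattice with an involution satisfying
De Morgan's law. -/
class DeMorganAlg (α : Type) extends DistribLattice α, BoundedOrder α where
  dneg : α → α
  dneg_dneg : ∀ a, dneg (dneg a) = a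
  dneg_inf : ∀ a b, dneg (a ⊓ b) = dneg a ⊔ dneg b

/-- De Morgan terms in `n` variables. -/
inductive DMTerm (n : ℕ) : Type
  | var : Fin n → DMTerm n
  | bot : DMTerm n
  | top : DMTerm n
  | neg : DMTerm n → DMTerm n
  | inf : DMTerm n → DMTerm n → DMTerm n
  | sup : DMTerm n → DMTerm n → DMTerm n

/-- Evaluation of a De Morgan term in a De Morgan algebra. -/
def DMTerm.eval {D : Type} [DeMorganAlg D] {n : ℕ} (d : Fin n → D) : DMTerm n → D
  | .var i => d i
  | .bot => ⊥
  | .top => ⊤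
  | .neg t => DeMorganAlg.dneg (t.eval d)
  | .inf s t => s.eval d ⊓ t.eval d
  | .sup s t => s.eval d ⊔ t.eval d

/-- De Morgan terms are identified iff equal in every De Morgan algebra. -/
instance dmSetoid (n : ℕ) : Setoid (DMTerm n) where
  r s t := ∀ (D : Type) [DeMorganAlg D] (d : Fin n → D), s.eval d = t.eval d
  iseqv :=
    ⟨fun _ _ _ _ => rfl, fun h D _ d => (h D d).symm,
      fun h₁ h₂ D _ d => (h₁ D d).trans (h₂ D d)⟩

/-- The free De Morgan algebra on `n` generators. -/
def FreeDM (n : ℕ) : Type := Quotient (dmSetoid n)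

def FreeDM.sup {n : ℕ} : FreeDM n → FreeDM n → FreeDM n :=
  Quotient.map₂ DMTerm.sup (fun _ _ h₁ _ _ h₂ D _ d => by
    show DMTerm.eval d _ = DMTerm.eval d _
    simp only [DMTerm.eval, h₁ D d, h₂ D d])

def FreeDM.inf {n : ℕ} : FreeDM n → FreeDM n → FreeDM n :=
  Quotient.map₂ DMTerm.inf (fun _ _ h₁ _ _ h₂ D _ d => by
    show DMTerm.eval d _ = DMTerm.eval d _
    simp only [DMTerm.eval, h₁ D d, h₂ D d])

/-- Bounded lattice terms in `m` variables. -/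
inductive BLatTerm (m : ℕ) : Type
  | var : Fin m → BLatTerm m
  | bot : BLatTerm m
  | top : BLatTerm m
  | inf : BLatTerm m → BLatTerm m → BLatTerm m
  | sup : BLatTerm m → BLatTerm m → BLatTerm m

/-- Evaluation of a bounded lattice term. -/
def BLatTerm.eval {D : Type} [Lattice D] [BoundedOrder D] {m : ℕ} (d : Fin m → D) :
    BLatTerm m → D
  | .var i => d i
  | .bot => ⊥
  | .top => ⊤
  | .inf s t => s.eval d ⊓ t.eval d
  | .sup s t => s.eval d ⊔ t.eval d

/-- Bounded lattice terms are identified iff equal in every bounded distributive lattice. -/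
instance bLatSetoid (m : ℕ) : Setoid (BLatTerm m) where
  r s t := ∀ (D : Type) [DistribLattice D] [BoundedOrder D] (d : Fin m → D),
    s.eval d = t.eval d
  iseqv :=
    ⟨fun _ _ _ _ _ => rfl, fun h D _ _ d => (h D d).symm,
      fun h₁ h₂ D _ _ d => (h₁ D d).trans (h₂ D d)⟩

/-- The free bounded distributive lattice on `m` generators. -/
def FreeBDL (m : ℕ) : Type := Quotient (bLatSetoid m)

def FreeBDL.sup {m : ℕ} : FreeBDL m → FreeBDL m → FreeBDL m :=
  Quotient.map₂ BLatTerm.sup (fun _ _ h₁ _ _ h₂ D _ _ d => by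
    show BLatTerm.eval d _ = BLatTerm.eval d _
    simp only [BLatTerm.eval, h₁ D d, h₂ D d])

def FreeBDL.inf {m : ℕ} : FreeBDL m → FreeBDL m → FreeBDL m :=
  Quotient.map₂ BLatTerm.inf (fun _ _ h₁ _ _ h₂ D _ _ d => by
    show BLatTerm.eval d _ = BLatTerm.eval d _
    simp only [BLatTerm.eval, h₁ D d, h₂ D d])


section Aux

open OrderDual

theorem DeMorganAlg.dneg_injective {D : Type} [DeMorganAlg D] :
    Function.Injective (DeMorganAlg.dneg (α := D)) := fun a b h => by
  rw [← DeMorganAlg.dneg_dneg a, h, DeMorganAlg.dneg_dneg]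

theorem DeMorganAlg.dneg_antitone {D : Type} [DeMorganAlg D] {a b : D} (h : a ≤ b) :
    DeMorganAlg.dneg b ≤ DeMorganAlg.dneg a := by
  have h2 : DeMorganAlg.dneg (a ⊓ b) = DeMorganAlg.dneg a ⊔ DeMorganAlg.dneg b :=
    DeMorganAlg.dneg_inf a b
  rw [inf_eq_left.mpr h] at h2
  rw [h2]; exact le_sup_right

theorem DeMorganAlg.dneg_sup {D : Type} [DeMorganAlg D] (a b : D) :
    DeMorganAlg.dneg (a ⊔ b) = DeMorganAlg.dneg a ⊓ DeMorganAlg.dneg b := by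
  apply DeMorganAlg.dneg_injective
  rw [DeMorganAlg.dneg_inf, DeMorganAlg.dneg_dneg, DeMorganAlg.dneg_dneg,
    DeMorganAlg.dneg_dneg]

theorem DeMorganAlg.dneg_bot {D : Type} [DeMorganAlg D] :
    DeMorganAlg.dneg (⊥ : D) = ⊤ := by
  apply top_le_iff.mp
  refine le_trans ?_ (DeMorganAlg.dneg_antitone (bot_le (a := DeMorganAlg.dneg (⊤ : D))))
  rw [DeMorganAlg.dneg_dneg]

theorem DeMorganAlg.dneg_top {D : Type} [DeMorganAlg D] :
    DeMorganAlg.dneg (⊤ : D) = ⊥ := by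
  apply DeMorganAlg.dneg_injective
  rw [DeMorganAlg.dneg_dneg, DeMorganAlg.dneg_bot]

instance prodDM (D : Type) [DistribLattice D] [BoundedOrder D] : DeMorganAlg (D × Dᵒᵈ) where
  dneg p := (OrderDual.ofDual p.2, OrderDual.toDual p.1)
  dneg_dneg _ := rfl
  dneg_inf _ _ := rfl

/-- Negation normal form: `.1` is the positive form, `.2` the negative form. -/
def nnfP {n : ℕ} : DMTerm n → BLatTerm (n + n) × BLatTerm (n + n)
  | .var i => (.var (Fin.castAdd n i), .var (Fin.natAdd n i))
  | .bot => (.bot, .top)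
  | .top => (.top, .bot)
  | .neg t => (nnfP t).swap
  | .inf s t => (.inf (nnfP s).1 (nnfP t).1, .sup (nnfP s).2 (nnfP t).2)
  | .sup s t => (.sup (nnfP s).1 (nnfP t).1, .inf (nnfP s).2 (nnfP t).2)

def nnf1 {n : ℕ} (t : DMTerm n) : BLatTerm (n + n) := (nnfP t).1

/-- Substitution back: lattice term in `2n` variables to a De Morgan term. -/
def backSub {n : ℕ} : BLatTerm (n + n) → DMTerm n
  | .var i => Fin.addCases (fun j => DMTerm.var j) (fun j => DMTerm.neg (DMTerm.var j)) i
  | .bot => .bot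
  | .top => .top
  | .inf s t => .inf (backSub s) (backSub t)
  | .sup s t => .sup (backSub s) (backSub t)

theorem eval_nnfP {n : ℕ} (D : Type) [DistribLattice D] [BoundedOrder D]
    (d : Fin (n + n) → D) (t : DMTerm n) :
    DMTerm.eval (D := D × Dᵒᵈ)
      (fun i => (d (Fin.castAdd n i), OrderDual.toDual (d (Fin.natAdd n i)))) t
      = (BLatTerm.eval d (nnfP t).1, OrderDual.toDual (BLatTerm.eval d (nnfP t).2)) := by
  induction t with
  | var i => rfl
  | bot => rfl
  | top => rfl
  | neg t ih => simp only [DMTerm.eval, ih]; rfl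
  | inf s t ihs iht => simp only [DMTerm.eval, ihs, iht]; rfl
  | sup s t ihs iht => simp only [DMTerm.eval, ihs, iht]; rfl

theorem eval_backSub {n : ℕ} (D : Type) [DeMorganAlg D] (d : Fin n → D)
    (u : BLatTerm (n + n)) :
    DMTerm.eval d (backSub u)
      = BLatTerm.eval (Fin.addCases d (fun i => DeMorganAlg.dneg (d i))) u := by
  induction u with
  | var i =>
    refine Fin.addCases (fun j => ?_) (fun j => ?_) i <;>
      simp only [backSub, BLatTerm.eval, DMTerm.eval, Fin.addCases_left, Fin.addCases_right]
  | bot => rfl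
  | top => rfl
  | inf s t ihs iht => simp only [backSub, DMTerm.eval, BLatTerm.eval, ihs, iht]
  | sup s t ihs iht => simp only [backSub, DMTerm.eval, BLatTerm.eval, ihs, iht]

theorem eval_backSub_nnfP {n : ℕ} (D : Type) [DeMorganAlg D] (d : Fin n → D)
    (t : DMTerm n) :
    DMTerm.eval d (backSub (nnfP t).1) = t.eval d ∧
    DMTerm.eval d (backSub (nnfP t).2) = DeMorganAlg.dneg (t.eval d) := by
  induction t with
  | var i =>
    constructor <;>
      simp only [nnfP, backSub, DMTerm.eval, Fin.addCases_left, Fin.addCases_right]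
  | bot => exact ⟨rfl, DeMorganAlg.dneg_bot.symm⟩
  | top => exact ⟨rfl, DeMorganAlg.dneg_top.symm⟩
  | neg t ih =>
    refine ⟨ih.2, ?_⟩
    show DMTerm.eval d (backSub (nnfP t).1) = _
    rw [ih.1, DMTerm.eval, DeMorganAlg.dneg_dneg]
  | inf s t ihs iht =>
    constructor
    · simp only [nnfP, backSub, DMTerm.eval, ihs.1, iht.1]
    · simp only [nnfP, backSub, DMTerm.eval, ihs.2, iht.2, DeMorganAlg.dneg_inf]
  | sup s t ihs iht =>
    constructor
    · simp only [nnfP, backSub, DMTerm.eval, ihs.1, iht.1]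
    · simp only [nnfP, backSub, DMTerm.eval, ihs.2, iht.2, DeMorganAlg.dneg_sup]

theorem fst_eval {m : ℕ} {A B : Type} [Lattice A] [BoundedOrder A] [Lattice B]
    [BoundedOrder B] (d : Fin m → A × B) (u : BLatTerm m) :
    (BLatTerm.eval d u).1 = BLatTerm.eval (fun i => (d i).1) u := by
  induction u with
  | var i => rfl
  | bot => rfl
  | top => rfl
  | inf s t ihs iht => simp only [BLatTerm.eval, Prod.fst_inf, ihs, iht]
  | sup s t ihs iht => simp only [BLatTerm.eval, Prod.fst_sup, ihs, iht]

theorem nnf1_descends {n : ℕ} : ∀ s t : DMTerm n, s ≈ t →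
    (bLatSetoid (n + n)).r (nnf1 s) (nnf1 t) := by
  intro s t h D _ _ d
  have h2 := h (D × Dᵒᵈ)
    (fun i => (d (Fin.castAdd n i), OrderDual.toDual (d (Fin.natAdd n i))))
  rw [eval_nnfP, eval_nnfP] at h2
  exact congrArg Prod.fst h2

theorem backSub_descends {n : ℕ} : ∀ s t : BLatTerm (n + n), s ≈ t →
    (dmSetoid n).r (backSub s) (backSub t) := by
  intro s t h D _ d
  rw [eval_backSub, eval_backSub]
  exact h D _

end Aux

/-- The free De Morgan algebra on `n` generators is, as a bounded distributive lattice,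
isomorphic to the free bounded distributive lattice on `2n` generators, the generators
`x₁, …, xₙ, ¬x₁, …, ¬xₙ`. -/
theorem freeDM_iso_freeBDL (n : ℕ) :
    ∃ e : FreeDM n ≃ FreeBDL (n + n),
      (∀ x y, e (FreeDM.sup x y) = FreeBDL.sup (e x) (e y)) ∧
      (∀ x y, e (FreeDM.inf x y) = FreeBDL.inf (e x) (e y)) ∧
      e ⟦DMTerm.bot⟧ = ⟦BLatTerm.bot⟧ ∧
      e ⟦DMTerm.top⟧ = ⟦BLatTerm.top⟧ ∧
      (∀ i : Fin n, e ⟦DMTerm.var i⟧ = ⟦BLatTerm.var (Fin.castAdd n i)⟧) ∧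
      (∀ i : Fin n, e ⟦DMTerm.neg (DMTerm.var i)⟧ = ⟦BLatTerm.var (Fin.natAdd n i)⟧) := by
  refine ⟨⟨Quotient.map nnf1 nnf1_descends, Quotient.map backSub backSub_descends, ?_, ?_⟩,
    ?_, ?_, ?_, ?_, ?_, ?_⟩
  · intro x
    induction x using Quotient.inductionOn with
    | h t =>
      simp only [Quotient.map_mk]
      exact Quotient.sound (fun D _ d => (eval_backSub_nnfP D d t).1)
  · intro x
    induction x using Quotient.inductionOn with
    | h u =>
      simp only [Quotient.map_mk]
      refine Quotient.sound (fun D _ _ d => ?_)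
      have h1 := congrArg Prod.fst (eval_nnfP D d (backSub u))
      rw [eval_backSub (D × Dᵒᵈ)] at h1
      dsimp only at h1
      show BLatTerm.eval d (nnfP (backSub u)).1 = _
      rw [← h1, fst_eval]
      congr 1
      refine funext (Fin.addCases (fun j => ?_) (fun j => ?_)) <;>
        simp only [Fin.addCases_left, Fin.addCases_right] <;> rfl
  · intro x y
    induction x using Quotient.inductionOn with
    | h s =>
      induction y using Quotient.inductionOn with
      | h t => rfl
  · intro x y
    induction x using Quotient.inductionOn with
    | h s =>
      induction y using Quotient.inductionOn with
      | h t => rfl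
  · rfl
  · rfl
  · intro i; rfl
  · intro i; rfl
end

section
/- Flat distributive lattices have the disjunction property: if a ∨ b = 1 then a = 1 or b = 1. Dually, if a ∧ b = 0 then a = 0 or b = 0. -/
/-- Substitution of terms for the variables of a term. -/
def BLatTerm.subst {m k : ℕ} (γ : Fin m → BLatTerm k) : BLatTerm m → BLatTerm k
  | .var i => γ i
  | .bot => .bot
  | .top => .top
  | .inf s t => .inf (s.subst γ) (t.subst γ)
  | .sup s t => .sup (s.subst γ) (t.subst γ)

/-- Equality of bounded lattice terms in the free bounded distributive lattice, i.e. equality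
in every bounded distributive lattice. -/
def BTermEq {k : ℕ} (s t : BLatTerm k) : Prop :=
  ∀ (D : Type) [DistribLattice D] [BoundedOrder D] (d : Fin k → D), s.eval d = t.eval d

/-- A bounded distributive lattice `D` is *flat* (as a model of the Lawvere theory of bounded
distributive lattices) if every equation `α(d) = β(d)` between tuples of lattice polynomials
applied to a tuple `d` of elements of `D` factors as `α ∘ γ = β ∘ γ` (equality of lattice
polynomials, i.e. in the free distributive lattice) with `γ(d') = d` for some tuple `d'`. -/
def IsFlat (D : Type) [DistribLattice D] [BoundedOrder D] : Prop :=
  ∀ (n m : ℕ) (α β : Fin n → BLatTerm m) (d : Fin m → D),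
    (∀ i, (α i).eval d = (β i).eval d) →
    ∃ (k : ℕ) (γ : Fin m → BLatTerm k),
      (∀ i, BTermEq ((α i).subst γ) ((β i).subst γ)) ∧
      ∃ d' : Fin k → D, ∀ j, (γ j).eval d' = d j

theorem BLatTerm.eval_mono {D : Type} [Lattice D] [BoundedOrder D] {m : ℕ}
    {d d' : Fin m → D} (h : ∀ i, d i ≤ d' i) (s : BLatTerm m) :
    s.eval d ≤ s.eval d' := by
  induction s with
  | var i => exact h i
  | bot => exact le_rfl
  | top => exact le_rfl
  | inf s t hs ht => exact inf_le_inf hs ht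
  | sup s t hs ht => exact sup_le_sup hs ht

/-- The canonical bounded-lattice embedding of `Bool` into `D`. -/
def boolMap (D : Type) [Lattice D] [BoundedOrder D] (x : Bool) : D :=
  if x then ⊤ else ⊥

theorem boolMap_eval {D : Type} [Lattice D] [BoundedOrder D] {m : ℕ}
    (d : Fin m → Bool) (s : BLatTerm m) :
    s.eval (fun i => boolMap D (d i)) = boolMap D (s.eval d) := by
  induction s with
  | var i => rfl
  | bot => simp [BLatTerm.eval, boolMap]
  | top => simp [BLatTerm.eval, boolMap]
  | inf s t hs ht =>
    simp only [BLatTerm.eval, hs, ht]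
    cases s.eval d <;> cases t.eval d <;> simp [boolMap]
  | sup s t hs ht =>
    simp only [BLatTerm.eval, hs, ht]
    cases s.eval d <;> cases t.eval d <;> simp [boolMap]

theorem BLatTerm.eval_subst {D : Type} [Lattice D] [BoundedOrder D] {m k : ℕ}
    (γ : Fin m → BLatTerm k) (d : Fin k → D) (s : BLatTerm m) :
    (s.subst γ).eval d = s.eval (fun i => (γ i).eval d) := by
  induction s with
  | var i => rfl
  | bot => rfl
  | top => rfl
  | inf s t hs ht => simp [BLatTerm.subst, BLatTerm.eval, hs, ht]
  | sup s t hs ht => simp [BLatTerm.subst, BLatTerm.eval, hs, ht]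

/-- Flat bounded distributive lattices have the disjunction property, and dually:
if `a ⊔ b = ⊤` then `a = ⊤` or `b = ⊤`; if `a ⊓ b = ⊥` then `a = ⊥` or `b = ⊥`. -/
theorem flat_disjunction_property (D : Type) [DistribLattice D] [BoundedOrder D]
    (hD : IsFlat D) :
    (∀ a b : D, a ⊔ b = ⊤ → a = ⊤ ∨ b = ⊤) ∧
    (∀ a b : D, a ⊓ b = ⊥ → a = ⊥ ∨ b = ⊥) := by
  constructor
  · intro a b hab
    obtain ⟨k, γ, h1, d', hd'⟩ := hD 1 2 (fun _ => .sup (.var 0) (.var 1)) (fun _ => .top)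
      ![a, b] (by intro i; simpa [BLatTerm.eval] using hab)
    have hbool := h1 0 Bool (fun _ => false)
    simp only [BLatTerm.subst, BLatTerm.eval, BLatTerm.eval_subst] at hbool
    have key : ∀ j : Fin 2, (γ j).eval (fun _ => (false : Bool)) = true →
        (γ j).eval d' = ⊤ := by
      intro j hj
      have h2 : (γ j).eval (fun _ => boolMap D false) ≤ (γ j).eval d' :=
        BLatTerm.eval_mono (fun _ => by simp [boolMap]) _
      rw [boolMap_eval, hj] at h2
      simpa [boolMap] using top_le_iff.mp h2
    rcases Bool.or_eq_true_iff.mp hbool with h | h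
    · left; have := key 0 h; rw [hd' 0] at this; simpa using this
    · right; have := key 1 h; rw [hd' 1] at this; simpa using this
  · intro a b hab
    obtain ⟨k, γ, h1, d', hd'⟩ := hD 1 2 (fun _ => .inf (.var 0) (.var 1)) (fun _ => .bot)
      ![a, b] (by intro i; simpa [BLatTerm.eval] using hab)
    have hbool := h1 0 Bool (fun _ => true)
    simp only [BLatTerm.subst, BLatTerm.eval, BLatTerm.eval_subst] at hbool
    have key : ∀ j : Fin 2, (γ j).eval (fun _ => (true : Bool)) = false →
        (γ j).eval d' = ⊥ := by
      intro j hj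
      have h2 : (γ j).eval d' ≤ (γ j).eval (fun _ => boolMap D true) :=
        BLatTerm.eval_mono (fun _ => by simp [boolMap]) _
      rw [boolMap_eval, hj] at h2
      simpa [boolMap] using le_bot_iff.mp h2
    rcases Bool.and_eq_false_iff.mp hbool with h | h
    · left; have := key 0 h; rw [hd' 0] at this; simpa using this
    · right; have := key 1 h; rw [hd' 1] at this; simpa using this
end
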